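/- Let b₁, …, b_k be distinct real numbers and λ₁, …, λ_k > 0. Then the function φ(z) := Im( z − Σ_{i=1}^{k} λ_i/(z − b_i) ) = r·(1 + Σ_{i=1}^{k} λ_i/|z − b_i|²) is positive and harmonic on the upper half-plane H, so the pair β := ∂_{z̄} log φ + 1/(z − z̄), Φ := i(z − z̄)·∂_z log φ satisfies the hyperbolic vortex equations (V1) and (V2) on H. Moreover, for z ∈ H one has Φ(z) = 0 if and only if 1 + Σ_{i=1}^{k} λ_i/(z − b_i)² = 0, i.e. if and only if z is a root of the polynomial P(z) := Π_{i=1}^{k}(z − b_i)² + Σ_{i=1}^{k} λ_i·Π_{j ≠ i}(z − b_j)²; P has degree 2k, has no real roots, and has exactly k roots in H counted with multiplicity. -/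

import Mathlib

open Complex ComplexConjugate

noncomputable section

/-- Wirtinger derivative ∂_z f = (1/2)(∂_t f − i ∂_r f). -/
def wdz (f : ℂ → ℂ) (z : ℂ) : ℂ :=
  (2:ℂ)⁻¹ * (fderiv ℝ f z 1 - Complex.I * fderiv ℝ f z Complex.I)

/-- Wirtinger derivative ∂_z̄ f = (1/2)(∂_t f + i ∂_r f). -/
def wdzbar (f : ℂ → ℂ) (z : ℂ) : ℂ :=
  (2:ℂ)⁻¹ * (fderiv ℝ f z 1 + Complex.I * fderiv ℝ f z Complex.I)

/-- A real-valued function regarded as complex-valued. -/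
def cre (φ : ℂ → ℝ) : ℂ → ℂ := fun z => (φ z : ℂ)

/-- ∂_z log φ := (∂_z φ)/φ for positive real φ. -/
def dzlog (φ : ℂ → ℝ) (z : ℂ) : ℂ := wdz (cre φ) z / (φ z : ℂ)

/-- ∂_z̄ log φ := (∂_z̄ φ)/φ for positive real φ. -/
def dzbarlog (φ : ℂ → ℝ) (z : ℂ) : ℂ := wdzbar (cre φ) z / (φ z : ℂ)

/-- Flat Laplacian ∂_t² + ∂_r² on ℂ ≅ ℝ², where z = t + ir. -/
def lap2 (φ : ℂ → ℝ) (z : ℂ) : ℝ :=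
  fderiv ℝ (fun w => fderiv ℝ φ w 1) z 1 +
  fderiv ℝ (fun w => fderiv ℝ φ w Complex.I) z Complex.I

/-- The upper half-plane. -/
def H : Set ℂ := {z : ℂ | 0 < z.im}

/-- The connection coefficient β = ∂_z̄ log φ + 1/(z − z̄) of the vortex ansatz. -/
def betaOf (φ : ℂ → ℝ) (z : ℂ) : ℂ := dzbarlog φ z + 1 / (z - conj z)

/-- The Higgs field Φ = i(z − z̄)·∂_z log φ of the vortex ansatz. -/
def higgsOf (φ : ℂ → ℝ) (z : ℂ) : ℂ := Complex.I * (z - conj z) * dzlog φ z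

open Polynomial in
/-- The polynomial P(z) = Π(z−bᵢ)² + Σ λᵢ·Π_{j≠i}(z−bⱼ)². -/
def P10 (k : ℕ) (b lam : Fin k → ℝ) : Polynomial ℂ :=
  ∏ i : Fin k, (X - C ((b i : ℂ)))^2 +
    ∑ i : Fin k, C ((lam i : ℂ)) * ∏ j ∈ Finset.univ.erase i, (X - C ((b j : ℂ)))^2

/-- The 't Hooft super-potential φ(z) = Im(z − Σ λᵢ/(z − bᵢ)). -/
def phi10 (k : ℕ) (b lam : Fin k → ℝ) (z : ℂ) : ℝ :=
  (z - ∑ i : Fin k, (lam i : ℂ) / (z - (b i : ℂ))).im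


section TVAux
open Polynomial

/-- The ℝ-linear map v ↦ a*v + c*conj v. -/
def wlin (a c : ℂ) : ℂ →L[ℝ] ℂ :=
  a • (ContinuousLinearMap.id ℝ ℂ) + c • (Complex.conjCLE.toContinuousLinearMap)

@[simp] lemma wlin_apply (a c v : ℂ) : wlin a c v = a * v + c * conj v := by
  simp [wlin, smul_eq_mul]

lemma wlin_ext (L : ℂ →L[ℝ] ℂ) (a c : ℂ) (h1 : L 1 = a + c)
    (hI : L Complex.I = (a - c) * Complex.I) : L = wlin a c := by
  ext v
  have hv : v = v.re • (1:ℂ) + v.im • Complex.I := by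
    simp only [Complex.real_smul, mul_one]
    exact (Complex.re_add_im v).symm
  rw [hv, map_add, map_add, map_smul, map_smul, map_smul, map_smul, h1, hI]
  simp only [wlin_apply, Complex.conj_I, map_one, Complex.real_smul]
  ring

def HasWAt (F : ℂ → ℂ) (a c : ℂ) (z : ℂ) : Prop := HasFDerivAt F (wlin a c) z

namespace HasWAt

lemma const (c₀ z : ℂ) : HasWAt (fun _ => c₀) 0 0 z := by
  have : wlin 0 0 = 0 := by ext v; simp
  rw [HasWAt, this]; exact hasFDerivAt_const c₀ z

lemma of_hasDerivAt {f : ℂ → ℂ} {d z : ℂ} (h : HasDerivAt f d z) : HasWAt f d 0 z := by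
  have h2 := (h.hasFDerivAt).restrictScalars ℝ
  have : (ContinuousLinearMap.restrictScalars ℝ
      (ContinuousLinearMap.toSpanSingleton ℂ d)) = wlin d 0 := by
    apply wlin_ext <;> simp [mul_comm]
  rwa [this] at h2

lemma conj_comp {F : ℂ → ℂ} {a c z : ℂ} (h : HasWAt F a c z) :
    HasWAt (fun w => conj (F w)) (conj c) (conj a) z := by
  have h2 := (Complex.conjCLE.toContinuousLinearMap.hasFDerivAt (x := F z)).comp z h
  have h3 : (Complex.conjCLE.toContinuousLinearMap.comp (wlin a c)) = wlin (conj c) (conj a) := by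
    apply wlin_ext
    · simp [Complex.ext_iff]; constructor <;> ring
    · simp [Complex.ext_iff]; ring
  rw [HasWAt, ← h3]; exact h2

lemma add {F G : ℂ → ℂ} {a c a' c' z : ℂ} (hF : HasWAt F a c z) (hG : HasWAt G a' c' z) :
    HasWAt (fun w => F w + G w) (a + a') (c + c') z := by
  have h2 := HasFDerivAt.add hF hG
  have h3 : wlin a c + wlin a' c' = wlin (a + a') (c + c') := by
    apply wlin_ext <;> simp <;> ring
  rw [HasWAt, ← h3]; exact h2

lemma sub {F G : ℂ → ℂ} {a c a' c' z : ℂ} (hF : HasWAt F a c z) (hG : HasWAt G a' c' z) :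
    HasWAt (fun w => F w - G w) (a - a') (c - c') z := by
  have h2 := HasFDerivAt.sub hF hG
  have h3 : wlin a c - wlin a' c' = wlin (a - a') (c - c') := by
    apply wlin_ext <;> simp <;> ring
  rw [HasWAt, ← h3]; exact h2

lemma mul {F G : ℂ → ℂ} {a c a' c' z : ℂ} (hF : HasWAt F a c z) (hG : HasWAt G a' c' z) :
    HasWAt (fun w => F w * G w) (a * G z + F z * a') (c * G z + F z * c') z := by
  have h2 := HasFDerivAt.mul' hF hG
  have h3 : (F z • wlin a' c' + (wlin a c).smulRight (G z)) =
      wlin (a * G z + F z * a') (c * G z + F z * c') := by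
    apply wlin_ext <;> simp [smul_eq_mul] <;> ring
  rw [HasWAt, ← h3]; exact h2

lemma inv {F : ℂ → ℂ} {a c z : ℂ} (hF : HasWAt F a c z) (h0 : F z ≠ 0) :
    HasWAt (fun w => (F w)⁻¹) (-a / (F z)^2) (-c / (F z)^2) z := by
  have h2 := (hasFDerivAt_inv' (𝕜 := ℝ) h0).comp z hF
  have h3 : ((-ContinuousLinearMap.mulLeftRight ℝ ℂ (F z)⁻¹ (F z)⁻¹).comp (wlin a c)) =
      wlin (-a / (F z)^2) (-c / (F z)^2) := by
    apply wlin_ext <;> simp [smul_eq_mul] <;> field_simp <;> ring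
  rw [HasWAt, ← h3]; exact h2

lemma neg {F : ℂ → ℂ} {a c z : ℂ} (h : HasWAt F a c z) :
    HasWAt (fun w => -(F w)) (-a) (-c) z := by
  have h2 := HasFDerivAt.neg h
  have h3 : -(wlin a c) = wlin (-a) (-c) := by
    apply wlin_ext <;> simp <;> ring
  rw [HasWAt, ← h3]; exact h2

lemma wdz_eq {F : ℂ → ℂ} {a c z : ℂ} (h : HasWAt F a c z) : wdz F z = a := by
  have hf : fderiv ℝ F z = wlin a c := h.fderiv
  rw [wdz, hf]
  simp [Complex.ext_iff]; constructor <;> ring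

lemma wdzbar_eq {F : ℂ → ℂ} {a c z : ℂ} (h : HasWAt F a c z) : wdzbar F z = c := by
  have hf : fderiv ℝ F z = wlin a c := h.fderiv
  rw [wdzbar, hf]
  simp [Complex.ext_iff]; constructor <;> ring

end HasWAt
variable (k : ℕ) (b lam : Fin k → ℝ)

def tvF0 (z : ℂ) : ℂ := z - ∑ i : Fin k, (lam i : ℂ) / (z - (b i : ℂ))
def tvF1 (z : ℂ) : ℂ := 1 + ∑ i : Fin k, (lam i : ℂ) / (z - (b i : ℂ))^2
def tvF2 (z : ℂ) : ℂ := -2 * ∑ i : Fin k, (lam i : ℂ) / (z - (b i : ℂ))^3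

variable {k b lam}

lemma tvF0_hasDerivAt {z : ℂ} (hz : ∀ i, z - (b i : ℂ) ≠ 0) :
    HasDerivAt (tvF0 k b lam) (tvF1 k b lam z) z := by
  have h : ∀ i ∈ Finset.univ, HasDerivAt (fun w => (lam i : ℂ) / (w - (b i : ℂ)))
      (-((lam i : ℂ) / (z - (b i : ℂ))^2)) z := by
    intro i _
    have hd : HasDerivAt (fun w : ℂ => w - (b i : ℂ)) 1 z :=
      (hasDerivAt_id z).sub_const _
    have := (hasDerivAt_const z ((lam i : ℂ))).fun_div hd (hz i)
    refine this.congr_deriv (Eq.symm ?_)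
    field_simp
    ring
  have hsum : HasDerivAt (fun w => ∑ i : Fin k, (lam i : ℂ) / (w - (b i : ℂ)))
      (∑ i : Fin k, -((lam i : ℂ) / (z - (b i : ℂ))^2)) z := HasDerivAt.fun_sum h
  have h2 := (hasDerivAt_id z).sub hsum
  have h3 : (1 : ℂ) - ∑ i : Fin k, -((lam i : ℂ) / (z - (b i : ℂ))^2) = tvF1 k b lam z := by
    simp [tvF1, sub_neg_eq_add]
  rw [h3] at h2
  exact h2

lemma tvF1_hasDerivAt {z : ℂ} (hz : ∀ i, z - (b i : ℂ) ≠ 0) :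
    HasDerivAt (tvF1 k b lam) (tvF2 k b lam z) z := by
  have h : ∀ i ∈ Finset.univ, HasDerivAt (fun w => (lam i : ℂ) / (w - (b i : ℂ))^2)
      (-2 * ((lam i : ℂ) / (z - (b i : ℂ))^3)) z := by
    intro i _
    have hd : HasDerivAt (fun w : ℂ => w - (b i : ℂ)) 1 z :=
      (hasDerivAt_id z).sub_const _
    have hd2 : HasDerivAt (fun w : ℂ => (w - (b i : ℂ))^2) (2 * (z - (b i : ℂ)) * 1) z := by
      exact hd.pow 2 |>.congr_deriv (by push_cast; ring)
    have h0 := hz i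
    have hsq : (z - (b i : ℂ))^2 ≠ 0 := pow_ne_zero _ h0
    have := (hasDerivAt_const z ((lam i : ℂ))).fun_div hd2 hsq
    refine this.congr_deriv (Eq.symm ?_)
    field_simp
    ring
  have hsum : HasDerivAt (fun w => ∑ i : Fin k, (lam i : ℂ) / (w - (b i : ℂ))^2)
      (∑ i : Fin k, -2 * ((lam i : ℂ) / (z - (b i : ℂ))^3)) z := HasDerivAt.fun_sum h
  have h2 := (hasDerivAt_const z (1:ℂ)).add hsum
  have h3 : (0 : ℂ) + ∑ i : Fin k, -2 * ((lam i : ℂ) / (z - (b i : ℂ))^3) = tvF2 k b lam z := by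
    simp [tvF2, Finset.mul_sum]
  rw [h3] at h2
  exact h2

def tvU (k : ℕ) (b lam : Fin k → ℝ) (z : ℂ) : ℂ := tvF0 k b lam z - conj (tvF0 k b lam z)

lemma H_open : IsOpen H := isOpen_lt continuous_const Complex.continuous_im

lemma wdz_congr {F G : ℂ → ℂ} {z : ℂ} (h : F =ᶠ[nhds z] G) : wdz F z = wdz G z := by
  unfold wdz; rw [h.fderiv_eq]
lemma wdzbar_congr {F G : ℂ → ℂ} {z : ℂ} (h : F =ᶠ[nhds z] G) : wdzbar F z = wdzbar G z := by
  unfold wdzbar; rw [h.fderiv_eq]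

variable {k : ℕ} {b lam : Fin k → ℝ}

lemma phi_eq (z : ℂ) : phi10 k b lam z = (tvF0 k b lam z).im := rfl

lemma cre_phi_eq : cre (phi10 k b lam) = fun z => tvU k b lam z * ((2:ℂ)*Complex.I)⁻¹ := by
  funext z
  rw [cre, phi_eq, tvU, Complex.sub_conj]
  have h2 : (2:ℂ)*Complex.I ≠ 0 := by simp [Complex.I_ne_zero]
  field_simp
  push_cast
  ring

lemma hzb_of_H {z : ℂ} (hz : z ∈ H) : ∀ i, z - (b i : ℂ) ≠ 0 := by
  intro i h
  have : (z - (b i : ℂ)).im = 0 := by rw [h]; simp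
  simp only [Complex.sub_im, Complex.ofReal_im, sub_zero] at this
  exact (ne_of_gt hz) this

lemma phi_formula {z : ℂ} (hz : z ∈ H) :
    phi10 k b lam z = z.im * (1 + ∑ i : Fin k, lam i / Complex.normSq (z - (b i : ℂ))) := by
  rw [phi_eq, tvF0, Complex.sub_im]
  rw [Complex.im_sum]
  have : ∀ i : Fin k, ((lam i : ℂ) / (z - (b i : ℂ))).im
      = -(lam i * z.im / Complex.normSq (z - (b i : ℂ))) := by
    intro i
    rw [Complex.div_im]
    simp only [Complex.sub_im, Complex.sub_re, Complex.ofReal_im, Complex.ofReal_re, sub_zero]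
    ring
  rw [Finset.sum_congr rfl (fun i _ => this i)]
  rw [mul_add, mul_one, Finset.mul_sum]
  rw [Finset.sum_neg_distrib, sub_neg_eq_add]
  congr 1
  apply Finset.sum_congr rfl
  intro i _
  ring

lemma phi_pos {z : ℂ} (hz : z ∈ H) (hlam : ∀ i, 0 < lam i) : 0 < phi10 k b lam z := by
  rw [phi_formula hz]
  have h1 : (0:ℝ) ≤ ∑ i : Fin k, lam i / Complex.normSq (z - (b i : ℂ)) :=
    Finset.sum_nonneg fun i _ => div_nonneg (hlam i).le (Complex.normSq_nonneg _)
  have : (0:ℝ) < z.im := hz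
  nlinarith


lemma tvF0_hasWAt {z : ℂ} (hz : z ∈ H) : HasWAt (tvF0 k b lam) (tvF1 k b lam z) 0 z :=
  HasWAt.of_hasDerivAt (tvF0_hasDerivAt (hzb_of_H hz))

lemma tvF1_hasWAt {z : ℂ} (hz : z ∈ H) : HasWAt (tvF1 k b lam) (tvF2 k b lam z) 0 z :=
  HasWAt.of_hasDerivAt (tvF1_hasDerivAt (hzb_of_H hz))

lemma tvU_hasWAt {z : ℂ} (hz : z ∈ H) :
    HasWAt (tvU k b lam) (tvF1 k b lam z) (-(conj (tvF1 k b lam z))) z := by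
  have h1 := HasWAt.sub (tvF0_hasWAt (k := k) (b := b) (lam := lam) hz)
    (HasWAt.conj_comp (tvF0_hasWAt (k := k) (b := b) (lam := lam) hz))
  rw [show tvU k b lam = fun w => tvF0 k b lam w - conj (tvF0 k b lam w) from rfl]
  simpa using h1

lemma cre_phi_hasWAt {z : ℂ} (hz : z ∈ H) : HasWAt (cre (phi10 k b lam))
    (tvF1 k b lam z * ((2:ℂ)*Complex.I)⁻¹)
    (-(conj (tvF1 k b lam z)) * ((2:ℂ)*Complex.I)⁻¹) z := by
  rw [cre_phi_eq]
  simpa using HasWAt.mul (tvU_hasWAt (k := k) (b := b) (lam := lam) hz)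
    (HasWAt.const (((2:ℂ)*Complex.I)⁻¹) z)

lemma tvU_val (z : ℂ) : tvU k b lam z = 2 * (phi10 k b lam z : ℂ) * Complex.I := by
  rw [tvU, Complex.sub_conj, phi_eq]
  push_cast
  ring

lemma phi_ne {z : ℂ} (hz : z ∈ H) (hlam : ∀ i, 0 < lam i) : (phi10 k b lam z : ℂ) ≠ 0 := by
  exact_mod_cast (phi_pos hz hlam).ne'

lemma tvU_ne {z : ℂ} (hz : z ∈ H) (hlam : ∀ i, 0 < lam i) : tvU k b lam z ≠ 0 := by
  rw [tvU_val]
  simp only [mul_ne_zero_iff]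
  exact ⟨⟨two_ne_zero, phi_ne hz hlam⟩, Complex.I_ne_zero⟩

def tvG (k : ℕ) (b lam : Fin k → ℝ) (w : ℂ) : ℂ :=
  Complex.I * (w - conj w) * tvF1 k b lam w * (tvU k b lam w)⁻¹

def tvB (k : ℕ) (b lam : Fin k → ℝ) (w : ℂ) : ℂ :=
  -(conj (tvF1 k b lam w)) * (tvU k b lam w)⁻¹ + (w - conj w)⁻¹

lemma w_sub_conj (z : ℂ) : z - conj z = ((2 * z.im : ℝ) : ℂ) * Complex.I := Complex.sub_conj z

lemma w_sub_conj_ne {z : ℂ} (hz : z ∈ H) : z - conj z ≠ 0 := by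
  rw [w_sub_conj]
  have : (0:ℝ) < z.im := hz
  have h0 : (0:ℝ) < z.im := hz
  refine mul_ne_zero ?_ Complex.I_ne_zero
  exact_mod_cast (by positivity : (0:ℝ) < 2*z.im).ne'

lemma wsubconj_hasWAt (z : ℂ) : HasWAt (fun w => w - conj w) 1 (-1) z := by
  have h1 : HasWAt (fun w : ℂ => w) 1 0 z := HasWAt.of_hasDerivAt (hasDerivAt_id z)
  simpa using h1.sub h1.conj_comp

lemma higgs_eq {z : ℂ} (hz : z ∈ H) (hlam : ∀ i, 0 < lam i) :
    higgsOf (phi10 k b lam) z = tvG k b lam z := by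
  rw [higgsOf, dzlog, (cre_phi_hasWAt (k := k) (b := b) (lam := lam) hz).wdz_eq, tvG, tvU_val]
  have h1 := phi_ne (k := k) (b := b) (lam := lam) hz hlam
  have h2 : Complex.I ≠ 0 := Complex.I_ne_zero
  field_simp

lemma beta_eq {z : ℂ} (hz : z ∈ H) (hlam : ∀ i, 0 < lam i) :
    betaOf (phi10 k b lam) z = tvB k b lam z := by
  rw [betaOf, dzbarlog, (cre_phi_hasWAt (k := k) (b := b) (lam := lam) hz).wdzbar_eq,
    tvB, tvU_val]
  have h1 := phi_ne (k := k) (b := b) (lam := lam) hz hlam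
  have h2 : Complex.I ≠ 0 := Complex.I_ne_zero
  field_simp

lemma higgs_ev {z : ℂ} (hz : z ∈ H) (hlam : ∀ i, 0 < lam i) :
    higgsOf (phi10 k b lam) =ᶠ[nhds z] tvG k b lam :=
  Filter.eventually_of_mem (H_open.mem_nhds hz) (fun w hw => higgs_eq hw hlam)

lemma beta_ev {z : ℂ} (hz : z ∈ H) (hlam : ∀ i, 0 < lam i) :
    betaOf (phi10 k b lam) =ᶠ[nhds z] tvB k b lam :=
  Filter.eventually_of_mem (H_open.mem_nhds hz) (fun w hw => beta_eq hw hlam)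

lemma vortex1 {z : ℂ} (hz : z ∈ H) (hlam : ∀ i, 0 < lam i) :
    wdzbar (higgsOf (phi10 k b lam)) z +
      betaOf (phi10 k b lam) z * higgsOf (phi10 k b lam) z = 0 := by
  have hU0 := tvU_ne (k := k) (b := b) (lam := lam) hz hlam
  have hW0 := w_sub_conj_ne hz
  have hG : HasWAt (tvG k b lam) _ _ z :=
    (((HasWAt.const Complex.I z).mul (wsubconj_hasWAt z)).mul
      (tvF1_hasWAt (k := k) (b := b) (lam := lam) hz)).mul
      ((tvU_hasWAt (k := k) (b := b) (lam := lam) hz).inv hU0)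
  rw [wdzbar_congr (higgs_ev hz hlam), hG.wdzbar_eq, beta_eq hz hlam, higgs_eq hz hlam,
    tvB, tvG]
  field_simp
  ring

lemma tvU_sq {z : ℂ} (hlam : ∀ i, 0 < lam i) :
    (tvU k b lam z)^2 = -(((4 * (phi10 k b lam z)^2 : ℝ)) : ℂ) := by
  rw [tvU_val]
  push_cast
  ring_nf
  rw [Complex.I_sq]
  ring

lemma wsubconj_sq (z : ℂ) : (z - conj z)^2 = -(((4 * z.im^2 : ℝ)) : ℂ) := by
  rw [w_sub_conj]
  push_cast
  ring_nf
  rw [Complex.I_sq]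
  ring

lemma normSq_higgs {z : ℂ} (hz : z ∈ H) (hlam : ∀ i, 0 < lam i) :
    Complex.normSq (higgsOf (phi10 k b lam) z) =
      z.im^2 * Complex.normSq (tvF1 k b lam z) / (phi10 k b lam z)^2 := by
  rw [higgs_eq hz hlam, tvG, tvU_val, w_sub_conj]
  have h1 := (phi_pos (k := k) (b := b) (lam := lam) hz hlam).ne'
  simp only [Complex.normSq_mul, Complex.normSq_inv, Complex.normSq_I, Complex.normSq_ofReal]
  field_simp
  ring
  norm_num [Complex.normSq_apply]

lemma vortex2 {z : ℂ} (hz : z ∈ H) (hlam : ∀ i, 0 < lam i) :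
    4 * z.im^2 * (wdz (betaOf (phi10 k b lam)) z).re =
      1 - Complex.normSq (higgsOf (phi10 k b lam) z) := by
  have hU0 := tvU_ne (k := k) (b := b) (lam := lam) hz hlam
  have hW0 := w_sub_conj_ne hz
  have hB : HasWAt (tvB k b lam) _ _ z :=
    ((((tvF1_hasWAt (k := k) (b := b) (lam := lam) hz).conj_comp).neg).mul
      ((tvU_hasWAt (k := k) (b := b) (lam := lam) hz).inv hU0)).add
      ((wsubconj_hasWAt z).inv hW0)
  have hre : wdz (betaOf (phi10 k b lam)) z =
      ((Complex.normSq (tvF1 k b lam z) * (-1/(4*(phi10 k b lam z)^2))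
        + 1/(4*z.im^2) : ℝ) : ℂ) := by
    rw [wdz_congr (beta_ev hz hlam), hB.wdz_eq]
    have hA : (starRingEnd ℂ) (tvF1 k b lam z) * tvF1 k b lam z
        = ((Complex.normSq (tvF1 k b lam z) : ℝ) : ℂ) := by
      rw [mul_comm, Complex.mul_conj]
    have hU2 := tvU_sq (k := k) (b := b) (lam := lam) (z := z) hlam
    have hW2 := wsubconj_sq z
    have hφ := phi_ne (k := k) (b := b) (lam := lam) hz hlam
    have him : ((z.im : ℝ) : ℂ) ≠ 0 := by
      exact_mod_cast (ne_of_gt (show (0:ℝ) < z.im from hz))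
    simp only [map_zero, neg_zero, zero_mul, zero_add, neg_neg, div_eq_mul_inv]
    have key : -(starRingEnd ℂ) (tvF1 k b lam z) * (-tvF1 k b lam z * (tvU k b lam z ^ 2)⁻¹)
        + -1 * (((z - (starRingEnd ℂ) z) ^ 2)⁻¹)
        = ((starRingEnd ℂ) (tvF1 k b lam z) * tvF1 k b lam z) * (tvU k b lam z ^ 2)⁻¹
          - ((z - (starRingEnd ℂ) z) ^ 2)⁻¹ := by ring
    rw [key, hA, hU2, hW2]
    have h4 : (4 * (phi10 k b lam z)^2 : ℝ) ≠ 0 := by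
      have := (phi_pos (k := k) (b := b) (lam := lam) hz hlam).ne'
      positivity
    have h5 : (4 * z.im^2 : ℝ) ≠ 0 := by
      have : (0:ℝ) < z.im := hz
      positivity
    push_cast
    field_simp
    ring
  rw [hre, Complex.ofReal_re, normSq_higgs hz hlam]
  have hφ := (phi_pos (k := k) (b := b) (lam := lam) hz hlam).ne'
  have him := (ne_of_gt (show (0:ℝ) < z.im from hz))
  field_simp
  ring

lemma phi_fderiv {w : ℂ} (hw : w ∈ H) :
    HasFDerivAt (phi10 k b lam) (Complex.imCLM.comp (wlin (tvF1 k b lam w) 0)) w :=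
  Complex.imCLM.hasFDerivAt.comp w (tvF0_hasWAt (k := k) (b := b) (lam := lam) hw)

lemma lap2_phi {z : ℂ} (hz : z ∈ H) : lap2 (phi10 k b lam) z = 0 := by
  have ev1 : (fun w => fderiv ℝ (phi10 k b lam) w 1) =ᶠ[nhds z]
      (fun w => (tvF1 k b lam w).im) := by
    refine Filter.eventually_of_mem (H_open.mem_nhds hz) (fun w hw => ?_)
    show fderiv ℝ (phi10 k b lam) w 1 = (tvF1 k b lam w).im
    rw [(phi_fderiv hw).fderiv]
    simp
  have ev2 : (fun w => fderiv ℝ (phi10 k b lam) w Complex.I) =ᶠ[nhds z]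
      (fun w => (tvF1 k b lam w).re) := by
    refine Filter.eventually_of_mem (H_open.mem_nhds hz) (fun w hw => ?_)
    show fderiv ℝ (phi10 k b lam) w Complex.I = (tvF1 k b lam w).re
    rw [(phi_fderiv hw).fderiv]
    simp
  have h1 : HasFDerivAt (fun w => (tvF1 k b lam w).im)
      (Complex.imCLM.comp (wlin (tvF2 k b lam z) 0)) z :=
    Complex.imCLM.hasFDerivAt.comp z (tvF1_hasWAt (k := k) (b := b) (lam := lam) hz)
  have h2 : HasFDerivAt (fun w => (tvF1 k b lam w).re)
      (Complex.reCLM.comp (wlin (tvF2 k b lam z) 0)) z :=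
    Complex.reCLM.hasFDerivAt.comp z (tvF1_hasWAt (k := k) (b := b) (lam := lam) hz)
  rw [lap2, ev1.fderiv_eq, ev2.fderiv_eq, h1.fderiv, h2.fderiv]
  simp

lemma prod_sq_ne {z : ℂ} (hz : z ∈ H) : (∏ i : Fin k, (z - (b i : ℂ))^2) ≠ 0 :=
  Finset.prod_ne_zero_iff.mpr fun i _ => pow_ne_zero _ (hzb_of_H hz i)

lemma higgs_zero_iff {z : ℂ} (hz : z ∈ H) (hlam : ∀ i, 0 < lam i) :
    higgsOf (phi10 k b lam) z = 0 ↔ tvF1 k b lam z = 0 := by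
  rw [higgs_eq hz hlam, tvG]
  have h1 : Complex.I ≠ 0 := Complex.I_ne_zero
  have h2 := w_sub_conj_ne hz
  have h3 := tvU_ne (k := k) (b := b) (lam := lam) hz hlam
  simp [mul_eq_zero, h1, h2, inv_eq_zero, h3]

lemma P10_eval (z : ℂ) (hz : ∀ i, z - (b i : ℂ) ≠ 0) :
    (P10 k b lam).eval z =
      (∏ i : Fin k, (z - (b i : ℂ))^2) * (1 + ∑ i : Fin k, (lam i : ℂ) / (z - (b i : ℂ))^2) := by
  simp only [P10, eval_add, eval_prod, eval_finset_sum, eval_mul, eval_pow, eval_sub, eval_X,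
    eval_C, mul_add, mul_one, Finset.mul_sum]
  congr 1
  apply Finset.sum_congr rfl
  intro i _
  rw [← Finset.mul_prod_erase Finset.univ _ (Finset.mem_univ i)]
  have h2 : (z - (b i : ℂ))^2 ≠ 0 := pow_ne_zero _ (hz i)
  have h1 := hz i
  field_simp

lemma P10_degree : (P10 k b lam).degree = 2 * k := by
  have hprod : (∏ i : Fin k, (X - C ((b i : ℂ)))^2).degree = ((2 * k : ℕ) : WithBot ℕ) := by
    rw [Polynomial.degree_prod]
    simp [Polynomial.degree_pow, Polynomial.degree_X_sub_C, two_mul, mul_comm]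
  rcases Nat.eq_zero_or_pos k with hk | hk
  · subst hk; simp [P10]
  · have hsum : (∑ i : Fin k, C ((lam i : ℂ)) * ∏ j ∈ Finset.univ.erase i,
        (X - C ((b j : ℂ)))^2).degree < ((2 * k : ℕ) : WithBot ℕ) := by
      apply lt_of_le_of_lt (Polynomial.degree_sum_le _ _)
      rw [Finset.sup_lt_iff (by exact_mod_cast WithBot.bot_lt_coe _)]
      intro i _
      apply lt_of_le_of_lt (Polynomial.degree_mul_le _ _)
      have h1 : (C ((lam i : ℂ))).degree ≤ 0 := Polynomial.degree_C_le
      have h2 : (∏ j ∈ Finset.univ.erase i, (X - C ((b j : ℂ)))^2).degree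
          = ((2 * (k - 1) : ℕ) : WithBot ℕ) := by
        rw [Polynomial.degree_prod]
        have : ∀ j ∈ Finset.univ.erase i, ((X - C ((b j : ℂ)))^2).degree = ((2:ℕ) : WithBot ℕ) := by
          intro j _; simp [Polynomial.degree_pow, Polynomial.degree_X_sub_C]
        rw [Finset.sum_congr rfl this]
        simp only [Finset.sum_const, Finset.card_erase_of_mem (Finset.mem_univ i),
          Finset.card_univ, Fintype.card_fin, nsmul_eq_mul]
        norm_cast
        omega
      calc (C ((lam i : ℂ))).degree + (∏ j ∈ Finset.univ.erase i, (X - C ((b j : ℂ)))^2).degree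
          ≤ 0 + ((2 * (k - 1) : ℕ) : WithBot ℕ) := add_le_add h1 (le_of_eq h2)
        _ < ((2 * k : ℕ) : WithBot ℕ) := by
            rw [zero_add]
            exact_mod_cast (by omega : 2 * (k - 1) < 2 * k)
    rw [P10, Polynomial.degree_add_eq_left_of_degree_lt (by rw [hprod]; exact hsum), hprod]
    norm_cast

lemma P10_eval_real (hb : Function.Injective b) (hlam : ∀ i, 0 < lam i) (x : ℝ) :
    (P10 k b lam).eval ((x : ℂ)) ≠ 0 := by
  have hcast : (P10 k b lam).eval ((x : ℂ)) =
      ((∏ i : Fin k, (x - b i)^2 + ∑ i : Fin k, lam i * ∏ j ∈ Finset.univ.erase i,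
        (x - b j)^2 : ℝ) : ℂ) := by
    simp only [P10, eval_add, eval_prod, eval_finset_sum, eval_mul, eval_pow, eval_sub,
      eval_X, eval_C]
    push_cast
    ring
  rw [hcast]
  rw [Ne, Complex.ofReal_eq_zero]
  have hsum_nonneg : (0:ℝ) ≤ ∑ i : Fin k, lam i * ∏ j ∈ Finset.univ.erase i, (x - b j)^2 := by
    apply Finset.sum_nonneg
    intro i _
    exact mul_nonneg (hlam i).le (Finset.prod_nonneg fun j _ => sq_nonneg _)
  by_cases hx : ∀ i, x ≠ b i
  · have hpos : (0:ℝ) < ∏ i : Fin k, (x - b i)^2 := by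
      apply Finset.prod_pos
      intro i _
      have := sub_ne_zero.mpr (hx i)
      positivity
    positivity
  · push_neg at hx
    obtain ⟨i₀, hi₀⟩ := hx
    have hterm : (0:ℝ) < lam i₀ * ∏ j ∈ Finset.univ.erase i₀, (x - b j)^2 := by
      apply mul_pos (hlam i₀)
      apply Finset.prod_pos
      intro j hj
      have hji : j ≠ i₀ := (Finset.mem_erase.mp hj).1
      have : x - b j ≠ 0 := by
        rw [hi₀, sub_ne_zero]
        exact fun h => hji (hb h.symm)
      positivity
    have hsum_pos : (0:ℝ) < ∑ i : Fin k, lam i * ∏ j ∈ Finset.univ.erase i, (x - b j)^2 := by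
      apply Finset.sum_pos' (fun i _ => mul_nonneg (hlam i).le
        (Finset.prod_nonneg fun j _ => sq_nonneg _)) ⟨i₀, Finset.mem_univ i₀, hterm⟩
    have := Finset.prod_nonneg (s := Finset.univ) (f := fun i => (x - b i)^2)
      (fun i _ => sq_nonneg _)
    linarith

lemma P10_map_conj : (P10 k b lam).map (starRingEnd ℂ) = P10 k b lam := by
  simp only [P10, Polynomial.map_add, Polynomial.map_prod, Polynomial.map_sum,
    Polynomial.map_mul, Polynomial.map_pow, Polynomial.map_sub, Polynomial.map_X,
    Polynomial.map_C, Complex.conj_ofReal]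

lemma P10_roots_card (hb : Function.Injective b) (hlam : ∀ i, 0 < lam i) :
    Multiset.card ((P10 k b lam).roots.filter (fun z => 0 < z.im)) = k := by
  classical
  have hdeg : (P10 k b lam).degree = ((2 * k : ℕ) : WithBot ℕ) := by exact_mod_cast P10_degree
  have hP0 : P10 k b lam ≠ 0 := by
    intro h
    rw [h, Polynomial.degree_zero] at hdeg
    exact WithBot.bot_ne_coe hdeg
  have hcard : Multiset.card (P10 k b lam).roots = 2 * k := by
    have := (Polynomial.splits_iff_card_roots (f := P10 k b lam)).mp
      (IsAlgClosed.splits (P10 k b lam))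
    rw [this, Polynomial.natDegree_eq_of_degree_eq_some hdeg]
  have hnoreal : ∀ z ∈ (P10 k b lam).roots, z.im ≠ 0 := by
    intro z hz him
    have hroot := Polynomial.isRoot_of_mem_roots hz
    have hzre : z = ((z.re : ℝ) : ℂ) := Complex.ext rfl (by simp [him])
    rw [Polynomial.IsRoot] at hroot
    exact P10_eval_real hb hlam z.re (hzre ▸ hroot)
  have hconj : (P10 k b lam).roots.map (starRingEnd ℂ) = (P10 k b lam).roots := by
    conv_rhs => rw [← P10_map_conj (k := k) (b := b) (lam := lam)]
    exact (Polynomial.Splits.roots_map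
      (IsAlgClosed.splits (P10 k b lam)) (starRingEnd ℂ)).symm
  have h2 : (P10 k b lam).roots.filter (fun z => ¬ 0 < z.im)
      = (P10 k b lam).roots.filter (fun z => z.im < 0) := by
    apply Multiset.filter_congr
    intro z hz
    have h := hnoreal z hz
    constructor
    · intro hle
      exact lt_of_le_of_ne (not_lt.mp hle) h
    · intro hlt
      exact not_lt.mpr hlt.le
  have hsplit : Multiset.card ((P10 k b lam).roots.filter (fun z => 0 < z.im)) +
      Multiset.card ((P10 k b lam).roots.filter (fun z => z.im < 0)) = 2 * k := by
    rw [← h2, ← Multiset.card_add, Multiset.filter_add_not, hcard]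
  have heq : Multiset.card ((P10 k b lam).roots.filter (fun z => z.im < 0)) =
      Multiset.card ((P10 k b lam).roots.filter (fun z => 0 < z.im)) := by
    conv_lhs => rw [← hconj]
    rw [← Multiset.countP_eq_card_filter, Multiset.countP_map]
    congr 1
    apply Multiset.filter_congr
    intro z _
    simp only [Complex.conj_im]
    exact ⟨fun h => by linarith, fun h => by linarith⟩
  omega

end TVAux

/-- The symmetric 't Hooft super-potential φ(z) = Im(z − Σᵢ λᵢ/(z − bᵢ)) is positive and
harmonic on H, equals r(1 + Σ λᵢ/|z−bᵢ|²), the associated ansatz pair (β, Φ) satisfies the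
hyperbolic vortex equations, Φ vanishes exactly at the zeros of 1 + Σ λᵢ/(z−bᵢ)², i.e. at
the roots of P(z) = Π(z−bᵢ)² + Σ λᵢ Π_{j≠i}(z−bⱼ)², and P has degree 2k, no real roots, and
exactly k roots (with multiplicity) in H. -/

theorem tHooft_vortex (k : ℕ) (b lam : Fin k → ℝ)
    (hb : Function.Injective b) (hlam : ∀ i, 0 < lam i) :
    (∀ z ∈ H,
      0 < phi10 k b lam z ∧
      phi10 k b lam z = z.im * (1 + ∑ i : Fin k, lam i / Complex.normSq (z - (b i : ℂ))) ∧
      lap2 (phi10 k b lam) z = 0) ∧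
    (∀ z ∈ H,
      wdzbar (higgsOf (phi10 k b lam)) z +
        betaOf (phi10 k b lam) z * higgsOf (phi10 k b lam) z = 0 ∧
      4 * z.im^2 * (wdz (betaOf (phi10 k b lam)) z).re =
        1 - Complex.normSq (higgsOf (phi10 k b lam) z)) ∧
    (∀ z ∈ H,
      (higgsOf (phi10 k b lam) z = 0 ↔
        1 + ∑ i : Fin k, (lam i : ℂ) / (z - (b i : ℂ))^2 = 0) ∧
      (higgsOf (phi10 k b lam) z = 0 ↔ (P10 k b lam).eval z = 0)) ∧
    (P10 k b lam).degree = 2 * k ∧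
    (∀ x : ℝ, (P10 k b lam).eval ((x : ℂ)) ≠ 0) ∧
    Multiset.card ((P10 k b lam).roots.filter (fun z => 0 < z.im)) = k := by
  refine ⟨fun z hz => ⟨phi_pos hz hlam, phi_formula hz, lap2_phi hz⟩,
    fun z hz => ⟨vortex1 hz hlam, vortex2 hz hlam⟩,
    fun z hz => ⟨higgs_zero_iff hz hlam, ?_⟩,
    by exact_mod_cast P10_degree, P10_eval_real hb hlam, P10_roots_card hb hlam⟩
  rw [higgs_zero_iff hz hlam, P10_eval z (hzb_of_H hz)]
  have h0 := prod_sq_ne (k := k) (b := b) hz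
  constructor
  · intro h
    rw [show (1 + ∑ i : Fin k, (lam i : ℂ) / (z - (b i : ℂ))^2) = tvF1 k b lam z from rfl, h,
      mul_zero]
  · intro h
    rcases mul_eq_zero.mp h with h | h
    · exact absurd h h0
    · exact h
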